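/- arXiv:2011.00453 — 2 statements merged into one kernel-verified Lean document; each statement's English description precedes it below -/
import Mathlib

section
/- For n ≥ 1 with Tribonacci representation e_1 e_2 ... e_r, the number of occurrences of the letter 1 in the prefix TR[0..n-1] of the Tribonacci word equals [e_1 ... e_{r-2}]_T + e_{r-1} (with the conventions that an empty word has value 0 and e_0 = 0). -/
/-- Tribonacci numbers: T 0 = 0, T 1 = 1, T 2 = 1, T (n+3) = T (n+2) + T (n+1) + T n. -/
def T : ℕ → ℕ
  | 0 => 0
  | 1 => 1
  | 2 => 1
  | n + 3 => T (n + 2) + T (n + 1) + T n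

/-- The Tribonacci morphism on letters: 0 ↦ 01, 1 ↦ 02, 2 ↦ 0. -/
def σm : ℕ → List ℕ
  | 0 => [0, 1]
  | 1 => [0, 2]
  | _ => [0]

/-- The Tribonacci morphism extended to words by concatenation. -/
def σw : List ℕ → List ℕ
  | [] => []
  | a :: t => σm a ++ σw t

/-- The Tribonacci word, the fixed point of σ beginning with 0
(σ^[n+1] [0] has length > n and each σ^[m] [0] is a prefix of the next). -/
def TR (n : ℕ) : ℕ := ((σw^[n + 1]) [0]).getD n 0

/-- Number of occurrences of the letter `a` in the factor TR[i..i+n-1]. -/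
def occ (a i n : ℕ) : ℕ := ((Finset.range n).filter (fun j => TR (i + j) = a)).card

/-- Parikh vector of the factor TR[i..i+n-1], as an element of ℤ³. -/
def ψv (i n : ℕ) : ℤ × ℤ × ℤ := ((occ 0 i n : ℤ), (occ 1 i n : ℤ), (occ 2 i n : ℤ))

/-- Relative Parikh vector f(i,n) = ψ(TR[i..i+n-1]) − ψ(TR[0..n-1]). -/
def frel (i n : ℕ) : ℤ × ℤ × ℤ := ψv i n - ψv 0 n

/-- The set A_n of relative Parikh vectors. -/
def Aset (n : ℕ) : Set (ℤ × ℤ × ℤ) := {v | ∃ i, frel i n = v}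

/-- Abelian complexity of TR: the number of distinct Parikh vectors of length-n factors. -/
noncomputable def ρab (n : ℕ) : ℕ := (Aset n).ncard

/-- Value of a binary word e₁ ⋯ e_r in the Tribonacci numeration system:
[w]_T = Σ_{1 ≤ i ≤ r} e_i T_{r+2-i}.  (Index 0 of the list is e₁.) -/
def valT (w : List ℕ) : ℕ := ∑ i ∈ Finset.range w.length, w.getD i 0 * T (w.length + 1 - i)

/-- `w` is a valid Tribonacci representation: a binary word beginning with 1
and containing no factor 111. -/
def GoodRep (w : List ℕ) : Prop :=
  w.head? = some 1 ∧ (∀ d ∈ w, d ≤ 1) ∧ ¬ ([1, 1, 1] <:+: w)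

/-- The last digit of a word, with the convention that it is 0 for the empty word. -/
def lastDigit (w : List ℕ) : ℕ := w.getD (w.length - 1) 0

section Aux

/-! ### Basic morphism lemmas -/

lemma sigma_w_append (u v : List ℕ) : σw (u ++ v) = σw u ++ σw v := by
  induction u with
  | nil => rfl
  | cons a t ih => simp [σw, ih]

lemma sigma_m_cons (a : ℕ) : ∃ t, σm a = 0 :: t := by
  match a with
  | 0 => exact ⟨[1], rfl⟩
  | 1 => exact ⟨[2], rfl⟩
  | n + 2 => exact ⟨[], rfl⟩

lemma length_sigma_w (u : List ℕ) :
    (σw u).length = u.length + u.count 0 + u.count 1 := by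
  induction u with
  | nil => rfl
  | cons a t ih =>
    match a with
    | 0 => simp [σw, σm, ih, List.count_cons]; omega
    | 1 => simp [σw, σm, ih, List.count_cons]; omega
    | n + 2 => simp [σw, σm, ih, List.count_cons]; omega

lemma count0_sigma_w (u : List ℕ) : (σw u).count 0 = u.length := by
  induction u with
  | nil => rfl
  | cons a t ih =>
    match a with
    | 0 => simp [σw, σm, List.count_cons, List.count_append, ih]
    | 1 => simp [σw, σm, List.count_cons, List.count_append, ih]
    | n + 2 => simp [σw, σm, List.count_cons, List.count_append, ih]

lemma count1_sigma_w (u : List ℕ) : (σw u).count 1 = u.count 0 := by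
  induction u with
  | nil => rfl
  | cons a t ih =>
    match a with
    | 0 => simp [σw, σm, List.count_cons, List.count_append, ih]
    | 1 => simp [σw, σm, List.count_cons, List.count_append, ih]
    | n + 2 => simp [σw, σm, List.count_cons, List.count_append, ih]

lemma sigma_w_prefix {u v : List ℕ} (h : u <+: v) : σw u <+: σw v := by
  obtain ⟨t, rfl⟩ := h
  exact ⟨σw t, (sigma_w_append u t).symm⟩

/-! ### Iterates of σ on [0] -/

lemma iter_prefix_succ (k : ℕ) : σw^[k] [0] <+: σw^[k + 1] [0] := by
  induction k with
  | zero => exact ⟨[1], rfl⟩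
  | succ k ih =>
    rw [Function.iterate_succ_apply', Function.iterate_succ_apply']
    exact sigma_w_prefix ih

lemma iter_prefix_le {k l : ℕ} (h : k ≤ l) : σw^[k] [0] <+: σw^[l] [0] := by
  induction l with
  | zero => rw [Nat.le_zero.mp h]
  | succ l ih =>
    rcases Nat.lt_or_ge k (l + 1) with h' | h'
    · exact (ih (Nat.lt_succ_iff.mp h')).trans (iter_prefix_succ l)
    · rw [Nat.le_antisymm h h']

lemma iter_length (k : ℕ) : k + 1 ≤ (σw^[k] [0]).length := by
  induction k with
  | zero => simp
  | succ k ih =>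
    rw [Function.iterate_succ_apply', length_sigma_w]
    have h0 : (0 : ℕ) ∈ σw^[k] [0] := (iter_prefix_le (Nat.zero_le k)).subset (by simp)
    have := List.count_pos_iff.mpr h0
    omega

end Aux

section Aux2

/-- The prefix of `TR` of length `n`, as a list. -/
def Pl (n : ℕ) : List ℕ := (List.range n).map TR

@[simp] lemma Pl_length (n : ℕ) : (Pl n).length = n := by simp [Pl]

lemma Pl_take {m n : ℕ} (h : m ≤ n) : (Pl n).take m = Pl m := by
  simp [Pl, ← List.map_take, List.take_range, Nat.min_eq_left h]

lemma Pl_prefix {m n : ℕ} (h : m ≤ n) : Pl m <+: Pl n := by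
  rw [← Pl_take h]; exact List.take_prefix m (Pl n)

lemma prefix_Pl {u : List ℕ} {n : ℕ} (h : u <+: Pl n) : u = Pl u.length := by
  have := List.prefix_iff_eq_take.mp h
  rw [this, Pl_take]
  · simp [Pl]
  · simpa using h.length_le

lemma getD_of_prefix {u v : List ℕ} (h : u <+: v) {i : ℕ} (hi : i < u.length) :
    v.getD i 0 = u.getD i 0 := by
  obtain ⟨t, rfl⟩ := h
  exact List.getD_append u t 0 i hi

lemma iter_getD {n k : ℕ} (h : n < (σw^[k] [0]).length) :
    (σw^[k] [0]).getD n 0 = TR n := by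
  rcases Nat.le_total k (n + 1) with hk | hk
  · rw [TR, getD_of_prefix (iter_prefix_le hk) h]
  · have hn : n < (σw^[n + 1] [0]).length := by have := iter_length (n + 1); omega
    rw [TR, getD_of_prefix (iter_prefix_le hk) hn]

lemma Pl_iter (k : ℕ) : Pl ((σw^[k] [0]).length) = σw^[k] [0] := by
  apply List.ext_getElem (by simp)
  intro i h1 h2
  have h1' : i < (σw^[k] [0]).length := by simpa using h1
  have : (σw^[k] [0]).getD i 0 = TR i := iter_getD h1'
  rw [List.getD_eq_getElem _ _ h2] at this
  rw [this]
  simp [Pl]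

/-- Key: σw of a prefix of TR, followed by 0, is again a prefix of TR. -/
lemma sigma_Pl_key (m : ℕ) :
    σw (Pl m) ++ [0] = Pl ((σw (Pl m)).length + 1) := by
  set k := m + 1 with hk
  have hml : m < (σw^[k] [0]).length := by have := iter_length k; omega
  have hpre : Pl m <+: σw^[k] [0] := by
    rw [← Pl_iter k]; exact Pl_prefix (Nat.le_of_lt (by simpa using hml))
  obtain ⟨rest, hrest⟩ := hpre
  have hlen : m + rest.length = (σw^[k] [0]).length := by
    rw [← hrest]; simp
  have hrest_ne : rest ≠ [] := by
    intro h; rw [h, List.length_nil] at hlen; omega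
  obtain ⟨a, t, rfl⟩ := List.exists_cons_of_ne_nil hrest_ne
  obtain ⟨s, hs⟩ := sigma_m_cons a
  have hiter : σw^[k + 1] [0] = σw (Pl m) ++ (0 :: (s ++ σw t)) := by
    rw [Function.iterate_succ_apply', ← hrest, sigma_w_append, σw, hs]
    simp
  have hpre2 : σw (Pl m) ++ [0] <+: Pl ((σw^[k + 1] [0]).length) := by
    rw [Pl_iter (k + 1), hiter]
    exact ⟨s ++ σw t, by simp⟩
  have h3 := prefix_Pl hpre2
  rw [h3]
  congr 1
  simp

lemma sigma_Pl (m : ℕ) : σw (Pl m) = Pl ((σw (Pl m)).length) := by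
  have h := sigma_Pl_key m
  have : σw (Pl m) <+: Pl ((σw (Pl m)).length + 1) := by
    rw [← h]; exact ⟨[0], rfl⟩
  exact prefix_Pl this

/-! ### occ and counts -/

lemma Pl_succ (n : ℕ) : Pl (n + 1) = Pl n ++ [TR n] := by
  simp [Pl, List.range_succ]

lemma occ_eq_count (a n : ℕ) : occ a 0 n = (Pl n).count a := by
  induction n with
  | zero => rfl
  | succ n ih =>
    rw [Pl_succ, List.count_append, ← ih, occ, occ, Finset.range_add_one,
      Finset.filter_insert]
    by_cases h : TR (0 + n) = a
    · rw [if_pos h]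
      rw [Finset.card_insert_of_notMem (by simp)]
      have : TR n = a := by simpa using h
      simp [this]
    · rw [if_neg h]
      have : TR n ≠ a := by simpa using h
      simp [List.count_singleton', this]

end Aux2

section Aux3

/-- shifted value: Σ e_i T(r+1-i), counts zeros in the prefix. -/
def valT1 (w : List ℕ) : ℕ := ∑ i ∈ Finset.range w.length, w.getD i 0 * T (w.length - i)

/-- doubly shifted value: Σ e_i T(r-i), counts ones in the prefix. -/
def valT2 (w : List ℕ) : ℕ := ∑ i ∈ Finset.range w.length, w.getD i 0 * T (w.length - 1 - i)

lemma getD_concat_lt (w : List ℕ) (d : ℕ) {i : ℕ} (h : i < w.length) :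
    (w ++ [d]).getD i 0 = w.getD i 0 := List.getD_append w [d] 0 i h

lemma getD_concat_last (w : List ℕ) (d : ℕ) :
    (w ++ [d]).getD w.length 0 = d := by
  rw [List.getD_append_right w [d] 0 w.length le_rfl]
  simp

lemma valT1_concat (w : List ℕ) (d : ℕ) : valT1 (w ++ [d]) = valT w + d := by
  unfold valT1 valT
  rw [List.length_append, List.length_singleton, Finset.sum_range_succ,
    getD_concat_last]
  have : w.length + 1 - w.length = 1 := by omega
  rw [this]
  have hT1 : T 1 = 1 := rfl
  rw [hT1, Nat.mul_one]
  congr 1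
  apply Finset.sum_congr rfl
  intro i hi
  have hi' : i < w.length := Finset.mem_range.mp hi
  rw [getD_concat_lt w d hi']

lemma valT2_concat (w : List ℕ) (d : ℕ) : valT2 (w ++ [d]) = valT1 w := by
  unfold valT2 valT1
  rw [List.length_append, List.length_singleton, Finset.sum_range_succ,
    getD_concat_last]
  have : w.length + 1 - 1 - w.length = 0 := by omega
  rw [this]
  have hT0 : T 0 = 0 := rfl
  rw [hT0, Nat.mul_zero, Nat.add_zero]
  apply Finset.sum_congr rfl
  intro i hi
  have hi' : i < w.length := Finset.mem_range.mp hi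
  rw [getD_concat_lt w d hi']
  congr 2
  all_goals omega

lemma valT_concat (w : List ℕ) (d : ℕ) :
    valT (w ++ [d]) = valT w + valT1 w + valT2 w + d := by
  unfold valT valT1 valT2
  rw [List.length_append, List.length_singleton, Finset.sum_range_succ,
    getD_concat_last]
  have : w.length + 1 + 1 - w.length = 2 := by omega
  rw [this]
  have hT2 : T 2 = 1 := rfl
  rw [hT2, Nat.mul_one]
  congr 1
  rw [← Finset.sum_add_distrib, ← Finset.sum_add_distrib]
  apply Finset.sum_congr rfl
  intro i hi
  have hi' : i < w.length := Finset.mem_range.mp hi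
  rw [getD_concat_lt w d hi']
  have h1 : w.length + 1 + 1 - i = (w.length - 1 - i) + 3 := by omega
  have h2 : w.length + 1 - i = (w.length - 1 - i) + 2 := by omega
  have h3 : w.length - i = (w.length - 1 - i) + 1 := by omega
  rw [h1, h2, h3, T]
  ring

/-- Main induction: the prefix of length `valT w` has `valT1 w` zeros and `valT2 w` ones. -/
lemma main_counts (w : List ℕ) (hw : ∀ d ∈ w, d ≤ 1) :
    (Pl (valT w)).count 0 = valT1 w ∧ (Pl (valT w)).count 1 = valT2 w := by
  induction w using List.reverseRecOn with
  | nil => simp [valT, valT1, valT2, Pl]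
  | append_singleton u d ih =>
    have hu : ∀ x ∈ u, x ≤ 1 := fun x hx => hw x (List.mem_append_left _ hx)
    have hd : d ≤ 1 := hw d (by simp)
    obtain ⟨ih0, ih1⟩ := ih hu
    set m := valT u with hm
    have hlen : (σw (Pl m)).length = m + valT1 u + valT2 u := by
      rw [length_sigma_w, ih0, ih1, Pl_length]
    have hval : valT (u ++ [d]) = (σw (Pl m)).length + d := by
      rw [valT_concat, hlen]
    interval_cases d
    · -- d = 0
      rw [hval]
      rw [Nat.add_zero, ← sigma_Pl m]
      constructor
      · rw [count0_sigma_w, Pl_length, valT1_concat]; omega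
      · rw [count1_sigma_w, ih0, valT2_concat]
    · -- d = 1
      rw [hval, ← sigma_Pl_key m]
      constructor
      · rw [List.count_append, count0_sigma_w, Pl_length, valT1_concat]
        simp [hm]
      · rw [List.count_append, count1_sigma_w, ih0, valT2_concat]
        simp

lemma valT2_eq (w : List ℕ) :
    valT2 w = valT w.dropLast.dropLast + lastDigit w.dropLast := by
  induction w using List.reverseRecOn with
  | nil => simp [valT2, valT, lastDigit]
  | append_singleton u d _ =>
    rw [List.dropLast_concat, valT2_concat]
    induction u using List.reverseRecOn with
    | nil => simp [valT1, valT, lastDigit]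
    | append_singleton v a _ =>
      rw [List.dropLast_concat, valT1_concat]
      congr 1
      unfold lastDigit
      rw [List.length_append, List.length_singleton]
      have : v.length + 1 - 1 = v.length := by omega
      rw [this, getD_concat_last]

end Aux3


/-- For n ≥ 1 with Tribonacci representation e₁ ⋯ e_r,
|TR[0..n-1]|₁ = [e₁ ⋯ e_{r-2}]_T + e_{r-1} (empty word has value 0, e₀ = 0). -/
theorem count1_prefix (n : ℕ) (hn : 1 ≤ n) (w : List ℕ) (hw : GoodRep w) (hv : valT w = n) :
    occ 1 0 n = valT w.dropLast.dropLast + lastDigit w.dropLast := by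
  obtain ⟨-, hdig, -⟩ := hw
  rw [occ_eq_count, ← hv, (main_counts w hdig).2, valT2_eq]
end

section
/- For n ≥ 1 with Tribonacci representation e_1 e_2 ... e_r, the number of occurrences of the letter 2 in the prefix TR[0..n-1] of the Tribonacci word equals [e_1 ... e_{r-3}]_T + e_{r-2} (with the conventions that an empty word has value 0 and e_i = 0 for i ≤ 0). -/
-- ===== auxiliary development =====


lemma T_add3 (n : ℕ) : T (n + 3) = T (n + 2) + T (n + 1) + T n := by rfl

lemma T_pos : ∀ k, 1 ≤ T (k + 1)
  | 0 => le_refl 1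
  | 1 => le_refl 1
  | (k + 2) => by
      have h : T (k + 2 + 1) = T (k + 2) + T (k + 1) + T k := T_add3 k
      have := T_pos k
      omega

lemma T_mono (k : ℕ) : T k ≤ T (k + 1) := by
  match k with
  | 0 => simp [T]
  | 1 => simp [T]
  | (k + 2) => have h : T (k + 2 + 1) = T (k + 2) + T (k + 1) + T k := T_add3 k; omega

lemma T_big : ∀ n, n + 1 ≤ T (n + 3)
  | 0 => by simp [T]
  | (n + 1) => by
      have h : T (n + 1 + 3) = T (n + 1 + 2) + T (n + 1 + 1) + T (n + 1) := T_add3 (n + 1)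
      have h2 : T (n + 1 + 2) = T (n + 3) := by norm_num
      have h1 := T_big n
      have h3 := T_pos (n + 1)
      omega

lemma σw_append (a b : List ℕ) : σw (a ++ b) = σw a ++ σw b := by
  induction a with
  | nil => rfl
  | cons x t ih => simp [σw, ih]

def W (k : ℕ) : List ℕ := (σw^[k]) [0]

lemma W_succ (k : ℕ) : W (k + 1) = σw (W k) := by
  rw [W, Function.iterate_succ_apply', W]

lemma W_rec (k : ℕ) : W (k + 3) = W (k + 2) ++ W (k + 1) ++ W k := by
  induction k with
  | zero => rfl
  | succ n ih =>
      show W ((n + 3) + 1) = W ((n + 2) + 1) ++ W ((n + 1) + 1) ++ W (n + 1)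
      conv_lhs => rw [W_succ (n + 3), ih]
      rw [σw_append, σw_append, ← W_succ, ← W_succ, ← W_succ]

lemma length_W : ∀ k, (W k).length = T (k + 2)
  | 0 => rfl
  | 1 => rfl
  | 2 => rfl
  | (k + 3) => by
      rw [W_rec]
      simp only [List.length_append, length_W (k + 2), length_W (k + 1), length_W k]
      have h : T (k + 2 + 3) = T (k + 2 + 2) + T (k + 2 + 1) + T (k + 2) := T_add3 (k + 2)
      have e1 : T (k + 2 + 3) = T (k + 3 + 2) := by norm_num
      have e2 : T (k + 2 + 2) = T (k + 2 + 2) := rfl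
      have e3 : T (k + 2 + 1) = T (k + 1 + 2) := by norm_num
      omega

lemma count_W : ∀ k, (W (k + 1)).count 2 = T k
  | 0 => rfl
  | 1 => rfl
  | 2 => rfl
  | (k + 3) => by
      have : W (k + 3 + 1) = W (k + 2 + 1) ++ W (k + 1 + 1) ++ W (k + 1) := by
        have := W_rec (k + 1)
        norm_num at this ⊢
        exact this
      rw [this]
      simp only [List.count_append, count_W (k + 2), count_W (k + 1), count_W k]
      exact (T_add3 k).symm

lemma σw_prefix {a b : List ℕ} (h : a <+: b) : σw a <+: σw b := by
  obtain ⟨c, rfl⟩ := h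
  rw [σw_append]
  exact List.prefix_append _ _

lemma W_prefix_succ (k : ℕ) : W k <+: W (k + 1) := by
  induction k with
  | zero => exact ⟨[1], rfl⟩
  | succ n ih => rw [W_succ, W_succ]; exact σw_prefix ih

lemma W_prefix_le {j k : ℕ} (h : j ≤ k) : W j <+: W k := by
  induction h with
  | refl => exact List.prefix_refl _
  | step h ih => exact ih.trans (W_prefix_succ _)

def Pre (u : List ℕ) : Prop := ∃ N, u <+: W N

lemma prefix_of_pre {u v : List ℕ} (hu : Pre u) (hv : Pre v) (h : u.length ≤ v.length) :
    u <+: v := by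
  obtain ⟨N, hN⟩ := hu
  obtain ⟨M, hM⟩ := hv
  exact List.prefix_of_prefix_length_le (hN.trans (W_prefix_le (le_max_left N M)))
    (hM.trans (W_prefix_le (le_max_right N M))) h

lemma pre_W (k : ℕ) : Pre (W k) := ⟨k, List.prefix_refl _⟩

lemma prefix_append_both {a l₁ l₂ : List ℕ} (h : l₁ <+: l₂) : a ++ l₁ <+: a ++ l₂ := by
  obtain ⟨c, rfl⟩ := h
  exact ⟨c, by simp⟩

lemma WW : ∀ j, W (j + 1) ++ W j <+: W (j + 2)
  | 0 => ⟨[2], rfl⟩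
  | (j + 1) => by
      have : W (j + 1 + 2) = W (j + 2) ++ W (j + 1) ++ W j := by
        have := W_rec j; norm_num at this ⊢; exact this
      rw [this]
      exact List.prefix_append _ _

lemma star (j : ℕ) {u : List ℕ} (hu : Pre u) (hl : u.length + 1 ≤ T (j + 2) + T (j + 1)) :
    Pre (W (j + 1) ++ u) := by
  match j with
  | 0 =>
      have h1 : u <+: W 0 := by
        apply prefix_of_pre hu (pre_W 0)
        rw [length_W]
        simp [T] at hl ⊢
        omega
      exact ⟨2, (prefix_append_both h1).trans (WW 0)⟩
  | (j + 1) =>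
      have h1 : u <+: W (j + 1) ++ W j := by
        apply prefix_of_pre hu ⟨j + 2, WW j⟩
        rw [List.length_append, length_W, length_W]
        have e1 : T (j + 1 + 2) = T (j + 3) := by norm_num
        have e2 : T (j + 1 + 1) = T (j + 2) := by norm_num
        omega
      refine ⟨j + 4, ?_⟩
      have h2 : W (j + 2) ++ u <+: W (j + 2) ++ (W (j + 1) ++ W j) := prefix_append_both h1
      rw [← List.append_assoc, ← W_rec] at h2
      have h3 : W (j + 3) <+: W (j + 4) := W_prefix_succ _
      have h4 := h2.trans h3
      norm_num at h4 ⊢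
      exact h4

lemma valT_nil : valT [] = 0 := rfl

lemma valT_cons (e : ℕ) (t : List ℕ) : valT (e :: t) = e * T (t.length + 2) + valT t := by
  unfold valT
  rw [List.length_cons, Finset.sum_range_succ']
  have h0 : (e :: t).getD 0 0 * T (t.length + 1 + 1 - 0) = e * T (t.length + 2) := by
    rw [List.getD_cons_zero]
    norm_num
  rw [h0, add_comm]
  congr 1
  apply Finset.sum_congr rfl
  intro i hi
  simp only [Finset.mem_range] at hi
  rw [List.getD_cons_succ]
  congr 2
  omega

lemma infix_of_cons {x w : List ℕ} {e : ℕ} (h : x <:+: w) : x <:+: e :: w :=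
  List.infix_cons h

lemma valT_bounds : ∀ n (w : List ℕ), w.length ≤ n → (∀ d ∈ w, d ≤ 1) →
    ¬([1, 1, 1] <:+: w) →
    (valT w + 1 ≤ T (w.length + 2)) ∧
    (¬([1, 1] <+: w) → valT w + 1 ≤ T (w.length + 1) + T w.length) := by
  intro n
  induction n with
  | zero =>
      intro w hw _ _
      have : w = [] := List.eq_nil_of_length_eq_zero (Nat.le_zero.mp hw)
      subst this
      simp [valT_nil, T]
  | succ n ih =>
      intro w hw hb h3
      match w with
      | [] => simp [valT_nil, T]
      | e :: t =>
        have hbt : ∀ d ∈ t, d ≤ 1 := fun d hd => hb d (List.mem_cons_of_mem _ hd)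
        have h3t : ¬([1, 1, 1] <:+: t) := fun h => h3 (infix_of_cons h)
        have hlt : t.length ≤ n := by simp at hw; omega
        have ihC := (ih t hlt hbt h3t).1
        have he : e ≤ 1 := hb e List.mem_cons_self
        rw [List.length_cons, valT_cons]
        have m1 : T (t.length + 2) ≤ T (t.length + 3) := by
          have := T_mono (t.length + 2)
          simp only [Nat.add_assoc, Nat.reduceAdd] at this
          exact this
        have r3 : T (t.length + 3) = T (t.length + 2) + T (t.length + 1) + T t.length :=
          T_add3 _
        constructor
        · interval_cases e
          · simp only [Nat.add_assoc, Nat.reduceAdd]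
            omega
          · have hD : ¬([1, 1] <+: t) := by
              intro hp
              apply h3
              obtain ⟨c, rfl⟩ := hp
              exact ⟨[], c, rfl⟩
            have ihD := (ih t hlt hbt h3t).2 hD
            simp only [Nat.add_assoc, Nat.reduceAdd]
            omega
        · intro hD
          interval_cases e
          · have := T_pos t.length
            simp only [Nat.add_assoc, Nat.reduceAdd]
            omega
          · match t with
            | [] => simp [valT_nil, valT_cons, T]
            | f :: t' =>
              have hf : f = 0 := by
                have hfle : f ≤ 1 := hbt f List.mem_cons_self
                interval_cases f
                · rfl
                · exact absurd ⟨t', rfl⟩ hD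
              subst hf
              have hv0 : valT (0 :: t') = valT t' := by
                rw [valT_cons, zero_mul, zero_add]
              have hbt' : ∀ d ∈ t', d ≤ 1 := fun d hd => hbt d (List.mem_cons_of_mem _ hd)
              have h3t' : ¬([1, 1, 1] <:+: t') := fun h => h3t (infix_of_cons h)
              have hlt' : t'.length ≤ n := by simp at hw; omega
              have ihC' := (ih t' hlt' hbt' h3t').1
              have r4 := T_add3 (t'.length + 1)
              simp only [List.length_cons, Nat.add_assoc, Nat.reduceAdd] at *
              omega

def B : List ℕ → List ℕ
  | [] => []
  | e :: t => (if e = 1 then W t.length else []) ++ B t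

lemma lenB : ∀ w : List ℕ, (∀ d ∈ w, d ≤ 1) → (B w).length = valT w := by
  intro w
  induction w with
  | nil => intro _; rfl
  | cons e t ih =>
      intro hb
      have he : e ≤ 1 := hb e List.mem_cons_self
      have iht := ih (fun d hd => hb d (List.mem_cons_of_mem _ hd))
      rw [valT_cons]
      show ((if e = 1 then W t.length else []) ++ B t).length = _
      interval_cases e <;> simp [iht, length_W]

def cnt : List ℕ → ℕ
  | [] => 0
  | e :: t => e * T (t.length - 1) + cnt t

lemma cntB : ∀ w : List ℕ, (∀ d ∈ w, d ≤ 1) → (B w).count 2 = cnt w := by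
  intro w
  induction w with
  | nil => intro _; rfl
  | cons e t ih =>
      intro hb
      have he : e ≤ 1 := hb e List.mem_cons_self
      have iht := ih (fun d hd => hb d (List.mem_cons_of_mem _ hd))
      show ((if e = 1 then W t.length else []) ++ B t).count 2 = e * T (t.length - 1) + cnt t
      interval_cases e
      · simpa using iht
      · rw [if_pos rfl, List.count_append, iht, one_mul]
        congr 1
        match t with
        | [] => rfl
        | f :: t' => exact count_W t'.length

lemma preB : ∀ n (w : List ℕ), w.length ≤ n → (∀ d ∈ w, d ≤ 1) →
    ¬([1, 1, 1] <:+: w) → Pre (B w) := by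
  intro n
  induction n with
  | zero =>
      intro w hw _ _
      have : w = [] := List.eq_nil_of_length_eq_zero (Nat.le_zero.mp hw)
      subst this
      exact ⟨0, List.nil_prefix⟩
  | succ n ih =>
      intro w hw hb h3
      match w with
      | [] => exact ⟨0, List.nil_prefix⟩
      | e :: t =>
        have hbt : ∀ d ∈ t, d ≤ 1 := fun d hd => hb d (List.mem_cons_of_mem _ hd)
        have h3t : ¬([1, 1, 1] <:+: t) := fun h => h3 (infix_of_cons h)
        have hlt : t.length ≤ n := by simp at hw; omega
        have iht := ih t hlt hbt h3t
        have he : e ≤ 1 := hb e List.mem_cons_self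
        show Pre ((if e = 1 then W t.length else []) ++ B t)
        interval_cases e
        · simpa using iht
        · rw [if_pos rfl]
          match t with
          | [] => exact ⟨0, by simp [B, W]⟩
          | f :: t' =>
            rw [show (f :: t').length = t'.length + 1 from rfl]
            apply star t'.length iht
            have hD : ¬([1, 1] <+: (f :: t')) := by
              intro hp
              apply h3
              obtain ⟨c, hc⟩ := hp
              rw [← hc]
              exact ⟨[], c, rfl⟩
            have hbd := (valT_bounds n (f :: t') hlt hbt h3t).2 hD
            rw [lenB _ hbt]
            simp only [List.length_cons, Nat.add_assoc, Nat.reduceAdd] at hbd ⊢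
            omega

lemma getD_prefix {a b : List ℕ} (h : a <+: b) {n : ℕ} (hn : n < a.length) :
    b.getD n 0 = a.getD n 0 := by
  obtain ⟨c, rfl⟩ := h
  exact List.getD_append _ _ _ _ hn

lemma TR_W {N n : ℕ} (h : n < (W N).length) : TR n = (W N).getD n 0 := by
  have h1 : TR n = (W (n + 1)).getD n 0 := rfl
  have h2 : n < (W (n + 1)).length := by
    rw [length_W]
    have := T_big n
    have e1 : T (n + 1 + 2) = T (n + 3) := by norm_num
    omega
  rcases le_total (n + 1) N with hle | hle
  · rw [h1, getD_prefix (W_prefix_le hle) h2]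
  · rw [h1, getD_prefix (W_prefix_le hle) h]

lemma occ_take (N : ℕ) : ∀ n, n ≤ (W N).length → occ 2 0 n = ((W N).take n).count 2 := by
  intro n
  induction n with
  | zero => intro _; rfl
  | succ n ih =>
      intro hn
      have hn' : n < (W N).length := by omega
      have ihn := ih (le_of_lt hn')
      unfold occ at ihn ⊢
      rw [Finset.range_add_one, Finset.filter_insert, List.take_succ]
      have hget : (W N)[n]? = some ((W N).getD n 0) := by
        rw [List.getElem?_eq_getElem hn']
        exact congrArg some (List.getD_eq_getElem _ _ hn').symm
      rw [hget, List.count_append, ← ihn]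
      by_cases h : TR (0 + n) = 2
      · rw [if_pos h]
        rw [Finset.card_insert_of_notMem (by simp)]
        have hg : (W N).getD n 0 = 2 := by
          rw [← TR_W hn']
          simpa using h
        rw [hg]
        simp
      · rw [if_neg h]
        have hcz : List.count 2 (Option.toList (some ((W N).getD n 0))) = 0 := by
          have hg : (W N).getD n 0 ≠ 2 := by
            rw [← TR_W hn']
            simpa using h
          rw [show (some ((W N).getD n 0)).toList = [(W N).getD n 0] from rfl,
            List.count_eq_zero, List.mem_singleton]
          exact fun hh => hg hh.symm
        rw [hcz]
        omega

lemma lastDigit_cons (e : ℕ) (t : List ℕ) (ht : t ≠ []) :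
    lastDigit (e :: t) = lastDigit t := by
  unfold lastDigit
  rw [List.length_cons]
  have h1 : t.length - 1 + 1 = t.length := by
    cases t with
    | nil => exact absurd rfl ht
    | cons a b => simp
  rw [show t.length + 1 - 1 = t.length - 1 + 1 by omega, List.getD_cons_succ]

lemma cnt_eq : ∀ n (w : List ℕ), w.length ≤ n →
    cnt w = valT w.dropLast.dropLast.dropLast + lastDigit w.dropLast.dropLast := by
  intro n
  induction n with
  | zero =>
      intro w hw
      have : w = [] := List.eq_nil_of_length_eq_zero (Nat.le_zero.mp hw)
      subst this; rfl
  | succ n ih =>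
      intro w hw
      match w with
      | [] => rfl
      | [e] => simp [cnt, valT_nil, lastDigit, T]
      | [e, f] => simp [cnt, valT_nil, lastDigit, T]
      | [e, f, g] => simp [cnt, valT_nil, valT_cons, lastDigit, T, List.dropLast]
      | e :: f :: g :: h :: t =>
        have hlt : (f :: g :: h :: t).length ≤ n := by simp at hw ⊢; omega
        have iht := ih (f :: g :: h :: t) hlt
        set X := (h :: t).dropLast with hX
        have d1 : (f :: g :: h :: t).dropLast = f :: g :: X := by
          rw [List.dropLast_cons₂, List.dropLast_cons₂]
        have d2 : (f :: g :: h :: t).dropLast.dropLast = f :: (g :: X).dropLast := by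
          rw [d1, List.dropLast_cons₂]
        set Z := (g :: X).dropLast with hZ
        have D1 : (e :: f :: g :: h :: t).dropLast = e :: f :: g :: X := by
          rw [List.dropLast_cons₂, d1]
        have D2 : (e :: f :: g :: h :: t).dropLast.dropLast = e :: f :: Z := by
          rw [D1, List.dropLast_cons₂, List.dropLast_cons₂, ← hZ]
        have D3 : (e :: f :: g :: h :: t).dropLast.dropLast.dropLast
            = e :: (f :: Z).dropLast := by
          rw [D2, List.dropLast_cons₂]
        have d3 : (f :: g :: h :: t).dropLast.dropLast.dropLast = (f :: Z).dropLast := by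
          rw [d2, hZ]
        have hXlen : X.length = t.length := by rw [hX]; simp
        have hZlen : Z.length = t.length := by rw [hZ]; simp [hXlen]
        have hlen3 : ((f :: Z).dropLast).length = t.length := by simp [hZlen]
        have hZne : (f :: Z) ≠ [] := by simp
        rw [D3, D2]
        have harg : (f :: g :: h :: t).length - 1 = t.length + 2 := by simp
        rw [show cnt (e :: f :: g :: h :: t)
              = e * T ((f :: g :: h :: t).length - 1) + cnt (f :: g :: h :: t) from rfl,
          harg, iht, valT_cons, hlen3, d3, d2, lastDigit_cons e (f :: Z) hZne]
        omega


/-- For n ≥ 1 with Tribonacci representation e₁ ⋯ e_r,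
|TR[0..n-1]|₂ = [e₁ ⋯ e_{r-3}]_T + e_{r-2} (empty word has value 0, eᵢ = 0 for i ≤ 0). -/
theorem count2_prefix (n : ℕ) (hn : 1 ≤ n) (w : List ℕ) (hw : GoodRep w) (hv : valT w = n) :
    occ 2 0 n = valT w.dropLast.dropLast.dropLast + lastDigit w.dropLast.dropLast := by
  obtain ⟨h1, h2, h3⟩ := hw
  have hpre : Pre (B w) := preB w.length w le_rfl h2 h3
  have hlen : (B w).length = n := (lenB w h2).trans hv
  obtain ⟨N, hN⟩ := hpre
  have hocc := occ_take N n (by rw [← hlen]; exact hN.length_le)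
  have htake : (W N).take n = B w := by
    rw [← hlen]
    exact (List.prefix_iff_eq_take.mp hN).symm
  rw [hocc, htake, cntB w h2, cnt_eq w.length w le_rfl]
end
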